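/- arXiv:2403.00201 — 2 statements merged into one kernel-verified Lean document; each statement's English description precedes it below -/
import Mathlib

section
/- Let M = (W, ≼, ⊑, V) be a model based on a downward-linear GS4 frame and let Σ be a finite subformula-closed set of L-formulas. For w ∈ W define ℓ(w) = {φ ∈ Σ : w ⊨ φ} and L(w) = {ℓ(v) : w ≼ v or v ≼ w}, and define w ≈ v iff ℓ(w) = ℓ(v) and L(w) = L(v). Then the quotient M/≈ has depth at most |Σ| + 1 and at most (|Σ|+1)·2^{|Σ|(|Σ|+1)+1} worlds. -/
universe u

/-- Formulas of the intuitionistic modal language `L`, with a countably infinite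
set of propositional variables indexed by `ℕ`. -/
inductive Fml : Type where
  | var : ℕ → Fml
  | bot : Fml
  | and : Fml → Fml → Fml
  | or : Fml → Fml → Fml
  | imp : Fml → Fml → Fml
  | dia : Fml → Fml
  | box : Fml → Fml
  deriving DecidableEq

/-- A birelational structure: a set of worlds, a set of fallible worlds, an
intuitionistic relation `le` (`≼`), a modal relation `sq` (`⊑`) and a valuation. -/
structure KModel : Type (u + 1) where
  W : Type u
  fallible : Set W
  le : W → W → Prop
  sq : W → W → Prop
  val : ℕ → Set W

namespace KModel

/-- The satisfaction relation. -/
def Sat (M : KModel.{u}) : Fml → M.W → Prop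
  | .var p, w => w ∈ M.val p
  | .bot, w => w ∈ M.fallible
  | .and φ ψ, w => Sat M φ w ∧ Sat M ψ w
  | .or φ ψ, w => Sat M φ w ∨ Sat M ψ w
  | .imp φ ψ, w => ∀ v, M.le w v → Sat M φ v → Sat M ψ v
  | .dia φ, w => ∀ u, M.le w u → ∃ v, M.sq u v ∧ Sat M φ v
  | .box φ, w => ∀ u v, M.le w u → M.sq u v → Sat M φ v

/-- `M` is a bi-intuitionistic model: both relations are preorders, the set of
fallible worlds is closed under both relations, and the valuation is
`≼`-monotone and contains the fallible worlds. -/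
def IsBiInt (M : KModel.{u}) : Prop :=
  (∀ w, M.le w w) ∧ (∀ u v w, M.le u v → M.le v w → M.le u w) ∧
  (∀ w, M.sq w w) ∧ (∀ u v w, M.sq u v → M.sq v w → M.sq u w) ∧
  (∀ w v, w ∈ M.fallible → M.le w v → v ∈ M.fallible) ∧
  (∀ w v, w ∈ M.fallible → M.sq w v → v ∈ M.fallible) ∧
  (∀ p w v, w ∈ M.val p → M.le w v → v ∈ M.val p) ∧
  (∀ p w, w ∈ M.fallible → w ∈ M.val p)

/-- `⊑` is forth–up confluent for `≼`. -/
def ForthUp (M : KModel.{u}) : Prop :=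
  ∀ w w' v, M.le w w' → M.sq w v → ∃ v', M.le v v' ∧ M.sq w' v'

/-- `⊑` is back–up confluent for `≼`. -/
def BackUp (M : KModel.{u}) : Prop :=
  ∀ w v v', M.sq w v → M.le v v' → ∃ w', M.le w w' ∧ M.sq w' v'

/-- `⊑` is forth–down confluent for `≼`. -/
def ForthDown (M : KModel.{u}) : Prop :=
  ∀ w v v', M.le w v → M.sq v v' → ∃ w', M.sq w w' ∧ M.le w' v'

/-- `≼` is upward linear. -/
def UpLinear (M : KModel.{u}) : Prop :=
  ∀ w u v, M.le w u → M.le w v → M.le u v ∨ M.le v u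

/-- There are no fallible worlds. -/
def Infallible (M : KModel.{u}) : Prop := M.fallible = ∅

/-- CS4 frames: back–up confluent bi-intuitionistic frames. -/
def IsCS4 (M : KModel.{u}) : Prop := M.IsBiInt ∧ M.BackUp

/-- IS4 frames: forth–up confluent infallible CS4 frames. -/
def IsIS4 (M : KModel.{u}) : Prop := M.IsCS4 ∧ M.ForthUp ∧ M.Infallible

/-- GS4 frames: upward-linear IS4 frames. -/
def IsGS4 (M : KModel.{u}) : Prop := M.IsIS4 ∧ M.UpLinear

/-- GS4c frames: forth–down confluent GS4 frames. -/
def IsGS4c (M : KModel.{u}) : Prop := M.IsGS4 ∧ M.ForthDown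

/-- S4I frames: forth–up and forth–down confluent infallible bi-intuitionistic frames. -/
def IsS4I (M : KModel.{u}) : Prop :=
  M.IsBiInt ∧ M.ForthUp ∧ M.ForthDown ∧ M.Infallible

end KModel

namespace KModel

/-- The positive part `ℓ+(w)` of the `Σ`-label of a world. -/
def labelPlus (M : KModel.{u}) (S : Set Fml) (w : M.W) : Set Fml :=
  {φ | φ ∈ S ∧ M.Sat φ w}

/-- The part `ℓ◇(w)` of the `Σ`-label of a world: formulas of `Σ` satisfied at
no `⊑`-successor of `w`. -/
def labelDia (M : KModel.{u}) (S : Set Fml) (w : M.W) : Set Fml :=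
  {φ | φ ∈ S ∧ ∀ v, M.sq w v → ¬ M.Sat φ v}

/-- `Z` is a `Σ`-bisimulation on `M`: it is forth–up and back–up confluent for
`≼` and preserves `Σ`-labels. -/
def IsBisim (M : KModel.{u}) (S : Set Fml) (Z : M.W → M.W → Prop) : Prop :=
  (∀ w w' v, M.le w w' → Z w v → ∃ v', M.le v v' ∧ Z w' v') ∧
  (∀ w v v', Z w v → M.le v v' → ∃ w', M.le w w' ∧ Z w' v') ∧
  (∀ w v, Z w v →
    labelPlus M S w = labelPlus M S v ∧ labelDia M S w = labelDia M S v)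

/-- The greatest `Σ`-bisimulation on `M`: the union of all `Σ`-bisimulations. -/
def GBisim (M : KModel.{u}) (S : Set Fml) (w v : M.W) : Prop :=
  ∃ Z, IsBisim M S Z ∧ Z w v

/-- The quotient of a model by a relation `r` on its worlds: worlds are the
classes; a class is fallible iff it contains a fallible world; `[w] ≼ [v]` iff
`w' ≼ v'` for some `w' ∼ w`, `v' ∼ v`; the modal relation is the transitive
closure of the analogous relation; and `[w] ∈ V(p)` iff `w ∈ V(p)`. -/
def QuotModel (M : KModel.{u}) (r : M.W → M.W → Prop) : KModel.{u} where
  W := Quot r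
  fallible := {x | ∃ w, Quot.mk r w = x ∧ w ∈ M.fallible}
  le := fun x y => ∃ w v, Quot.mk r w = x ∧ Quot.mk r v = y ∧ M.le w v
  sq := Relation.TransGen
    (fun x y => ∃ w v, Quot.mk r w = x ∧ Quot.mk r v = y ∧ M.sq w v)
  val := fun p => {x | ∃ w, Quot.mk r w = x ∧ w ∈ M.val p}

end KModel

/-- A set of formulas closed under subformulas. -/
def SubClosed (S : Set Fml) : Prop :=
  (∀ φ ψ : Fml, φ.and ψ ∈ S → φ ∈ S ∧ ψ ∈ S) ∧
  (∀ φ ψ : Fml, φ.or ψ ∈ S → φ ∈ S ∧ ψ ∈ S) ∧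
  (∀ φ ψ : Fml, φ.imp ψ ∈ S → φ ∈ S ∧ ψ ∈ S) ∧
  (∀ φ : Fml, φ.dia ∈ S → φ ∈ S) ∧
  (∀ φ : Fml, φ.box ∈ S → φ ∈ S)

namespace KModel

/-- The strict order `w ≺ v`: `w ≼ v` but not `v ≼ w`. -/
def Slt (M : KModel.{u}) (w v : M.W) : Prop := M.le w v ∧ ¬ M.le v w

/-- The model has depth at most `n`: every chain `w₀ ≺ w₁ ≺ … ≺ w_m` has `m ≤ n`. -/
def DepthLE (M : KModel.{u}) (n : ℕ) : Prop :=
  ∀ (m : ℕ) (c : ℕ → M.W), (∀ i < m, M.Slt (c i) (c (i + 1))) → m ≤ n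

/-- The model is shallow: its depth is finite. -/
def Shallow (M : KModel.{u}) : Prop := ∃ n : ℕ, M.DepthLE n

/-- `≼` is downward linear. -/
def DownLinear (M : KModel.{u}) : Prop :=
  ∀ w u v, M.le u w → M.le v w → M.le u v ∨ M.le v u

/-- The model is forest-like: the set of `≼`-predecessors of any world is
totally ordered by `≼`. -/
def ForestLike (M : KModel.{u}) : Prop :=
  ∀ w u v, M.le u w → M.le v w → M.le u v ∨ M.le v u

end KModel

namespace KModel

/-- `L(w)`: the set of `Σ`-labels `ℓ(v)` of worlds `v` comparable with `w`. -/
def labNbhd (M : KModel.{u}) (S : Set Fml) (w : M.W) : Set (Set Fml) :=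
  {X | ∃ v, (M.le w v ∨ M.le v w) ∧ X = M.labelPlus S v}

/-- The relation `w ≈ v`: `ℓ(w) = ℓ(v)` and `L(w) = L(v)`. -/
def approxRel (M : KModel.{u}) (S : Set Fml) (w v : M.W) : Prop :=
  M.labelPlus S w = M.labelPlus S v ∧ M.labNbhd S w = M.labNbhd S v

end KModel


section GS4Aux

open KModel

/-- Persistence: satisfaction is monotone along `≼`. -/
theorem gs4aux_sat_mono {M : KModel.{u}}
    (htr : ∀ u v w, M.le u v → M.le v w → M.le u w)
    (hval : ∀ p w v, w ∈ M.val p → M.le w v → v ∈ M.val p)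
    (hfall : ∀ w v, w ∈ M.fallible → M.le w v → v ∈ M.fallible)
    (φ : Fml) : ∀ w v, M.le w v → M.Sat φ w → M.Sat φ v := by
  induction φ with
  | var p => exact fun w v h hs => hval p w v hs h
  | bot => exact fun w v h hs => hfall w v hs h
  | and φ ψ ih1 ih2 => exact fun w v h hs => ⟨ih1 w v h hs.1, ih2 w v h hs.2⟩
  | or φ ψ ih1 ih2 =>
      exact fun w v h hs => hs.elim (fun h1 => Or.inl (ih1 w v h h1))
        (fun h1 => Or.inr (ih2 w v h h1))
  | imp φ ψ _ _ => exact fun w v h hs u hu hφ => hs u (htr _ _ _ h hu) hφ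
  | dia φ _ => exact fun w v h hs u hu => hs u (htr _ _ _ h hu)
  | box φ _ => exact fun w v h hs u x hu hx => hs u x (htr _ _ _ h hu) hx

/-- Encode a subset of `↑S` as a finset of the coerced type. -/
noncomputable def gs4aux_enc (S : Finset Fml) (X : Set Fml) : Finset {x // x ∈ S} :=
  @Finset.filter _ (fun φ => (φ : Fml) ∈ X) (Classical.decPred _) Finset.univ

theorem gs4aux_enc_inj {S : Finset Fml} {X Y : Set Fml} (hX : X ⊆ ↑S) (hY : Y ⊆ ↑S)
    (h : gs4aux_enc S X = gs4aux_enc S Y) : X = Y := by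
  ext φ
  constructor
  · intro hφ
    have hm : (⟨φ, hX hφ⟩ : {x // x ∈ S}) ∈ gs4aux_enc S X := by
      simp [gs4aux_enc, hφ]
    rw [h] at hm
    simpa [gs4aux_enc] using hm
  · intro hφ
    have hm : (⟨φ, hY hφ⟩ : {x // x ∈ S}) ∈ gs4aux_enc S Y := by
      simp [gs4aux_enc, hφ]
    rw [← h] at hm
    simpa [gs4aux_enc] using hm

end GS4Aux

/-- **Size of the quotient of a downward-linear GS4 model.** Let `M` be a model
based on a downward-linear GS4 frame and `Σ` a finite subformula-closed set of
`L`-formulas.  Define `ℓ(w) = {φ ∈ Σ : w ⊨ φ}`, `L(w) = {ℓ(v) : w ≼ v or v ≼ w}`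
and `w ≈ v` iff `ℓ(w) = ℓ(v)` and `L(w) = L(v)`.  Then the quotient `M/≈` has
depth at most `|Σ| + 1` and at most `(|Σ|+1) · 2^{|Σ|(|Σ|+1)+1}` worlds. -/
theorem gs4_quotient_bound (M : KModel.{u}) (hM : M.IsGS4) (hdl : M.DownLinear)
    (S : Finset Fml) (hS : SubClosed ↑S) :
    (M.QuotModel (M.approxRel ↑S)).DepthLE (S.card + 1) ∧
    Finite (M.QuotModel (M.approxRel ↑S)).W ∧
    Nat.card (M.QuotModel (M.approxRel ↑S)).W ≤
      (S.card + 1) * 2 ^ (S.card * (S.card + 1) + 1) := by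
  classical
  obtain ⟨⟨⟨hbi, _hback⟩, _hforth, _hinf⟩, hup⟩ := hM
  obtain ⟨hrefl, htr, _, _, hfle, _, hvalm, _⟩ := hbi
  set r := M.approxRel (↑S : Set Fml) with hr
  set ℓ : M.W → Set Fml := fun w => M.labelPlus (↑S) w with hℓ
  set LL : M.W → Set (Set Fml) := fun w => M.labNbhd (↑S) w with hLL
  -- basic facts
  have lsub : ∀ w, ℓ w ⊆ (↑S : Set Fml) := fun w φ h => h.1
  have lmono : ∀ w v, M.le w v → ℓ w ⊆ ℓ v := fun w v h φ hφ =>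
    ⟨hφ.1, gs4aux_sat_mono htr hvalm hfle φ w v h hφ.2⟩
  have Sfin : (↑S : Set Fml).Finite := S.finite_toSet
  have lfin : ∀ w, (ℓ w).Finite := fun w => Sfin.subset (lsub w)
  have lcard : ∀ w, (ℓ w).ncard ≤ S.card := by
    intro w
    have := Set.ncard_le_ncard (lsub w) Sfin
    rwa [Set.ncard_coe_finset] at this
  have lmem : ∀ w, ℓ w ∈ LL w := fun w => ⟨w, Or.inl (hrefl w), rfl⟩
  have Lsub : ∀ w X, X ∈ LL w → X ⊆ (↑S : Set Fml) := by
    rintro w X ⟨v, -, rfl⟩; exact lsub v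
  have Lfin : ∀ w, (LL w).Finite :=
    fun w => Sfin.finite_subsets.subset (fun X hX => Lsub w X hX)
  have Lchain : ∀ w X Y, X ∈ LL w → Y ∈ LL w → X ⊆ Y ∨ Y ⊆ X := by
    rintro w X Y ⟨a, ha, rfl⟩ ⟨b, hb, rfl⟩
    have hab : M.le a b ∨ M.le b a := by
      rcases ha with ha | ha <;> rcases hb with hb | hb
      · exact hup w a b ha hb
      · exact Or.inr (htr b w a hb ha)
      · exact Or.inl (htr a w b ha hb)
      · exact hdl w a b ha hb
    exact hab.imp (lmono a b) (lmono b a)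
  have Lconst : ∀ w v, M.le w v → LL w = LL v := by
    intro w v h
    ext X
    constructor
    · rintro ⟨u, hu, rfl⟩
      refine ⟨u, ?_, rfl⟩
      rcases hu with hu | hu
      · exact Or.symm (hup w u v hu h)
      · exact Or.inr (htr u w v hu h)
    · rintro ⟨u, hu, rfl⟩
      refine ⟨u, ?_, rfl⟩
      rcases hu with hu | hu
      · exact Or.inl (htr w v u h hu)
      · exact hdl v w u h hu
  have req : Equivalence r := by
    constructor
    · exact fun w => ⟨rfl, rfl⟩
    · exact fun h => ⟨h.1.symm, h.2.symm⟩
    · exact fun h1 h2 => ⟨h1.1.trans h2.1, h1.2.trans h2.2⟩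
  have mkeq : ∀ w v : M.W, Quot.mk r w = Quot.mk r v ↔ r w v :=
    fun w v => Quot.eq.trans (req.eqvGen_iff)
  -- quotient label
  set G : Quot r → Set Fml := Quot.lift ℓ (fun a b h => h.1) with hG
  have Gcard : ∀ x : Quot r, (G x).ncard ≤ S.card := by
    intro x
    obtain ⟨w, rfl⟩ := Quot.exists_rep x
    exact lcard w
  -- the strict-step lemma
  have hstep : ∀ x y : Quot r,
      (M.QuotModel r).le x y → x ≠ y → (G x).ncard < (G y).ncard := by
    intro x y hxy hne
    obtain ⟨w, v, rfl, rfl, hwv⟩ := hxy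
    have hsub : ℓ w ⊆ ℓ v := lmono w v hwv
    have hne' : ℓ w ≠ ℓ v := by
      intro h
      exact hne ((mkeq w v).2 ⟨h, Lconst w v hwv⟩)
    exact Set.ncard_lt_ncard (ssubset_of_subset_of_ne hsub hne') (lfin v)
  -- Depth bound
  have depth : (M.QuotModel r).DepthLE (S.card + 1) := by
    intro m c hc
    have hQle : ∀ i < m, (M.QuotModel r).le (c i) (c (i + 1)) := fun i hi => (hc i hi).1
    have hQne : ∀ i < m, c i ≠ c (i + 1) := by
      intro i hi h
      exact (hc i hi).2 (h ▸ (hc i hi).1)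
    have hmono : ∀ i ≤ m, i ≤ (G (c i)).ncard := by
      intro i hi
      induction i with
      | zero => exact Nat.zero_le _
      | succ j ih =>
          have hj : j < m := lt_of_lt_of_le (Nat.lt_succ_self j) hi
          have h1 := ih (le_of_lt hj)
          have h2 := hstep (c j) (c (j + 1)) (hQle j hj) (hQne j hj)
          omega
    have := hmono m le_rfl
    have := Gcard (c m)
    omega
  -- chain-union operator
  set bigU : M.W → ℕ → Set Fml := fun w k => ⋃₀ {X | X ∈ LL w ∧ X.ncard ≤ k} with hbigU
  have bigUsub : ∀ w k, bigU w k ⊆ (↑S : Set Fml) := by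
    rintro w k φ ⟨X, ⟨hX, -⟩, hφ⟩
    exact Lsub w X hX hφ
  have bigA : ∀ w X, X ∈ LL w → bigU w X.ncard = X := by
    intro w X hX
    apply Set.Subset.antisymm
    · rintro φ ⟨Y, ⟨hY, hYc⟩, hφ⟩
      rcases Lchain w X Y hX hY with h | h
      · have : X = Y := Set.eq_of_subset_of_ncard_le h hYc (Sfin.subset (Lsub w Y hY))
        exact this ▸ hφ
      · exact h hφ
    · intro φ hφ
      exact ⟨X, ⟨hX, le_rfl⟩, hφ⟩
  have bigC : ∀ w k, bigU w k ≠ ∅ → bigU w k ∈ LL w := by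
    intro w k hne
    set T : Set (Set Fml) := {X | X ∈ LL w ∧ X.ncard ≤ k} with hT
    have hTne : T.Nonempty := by
      by_contra h
      rw [Set.not_nonempty_iff_eq_empty] at h
      apply hne
      rw [hbigU]
      simp only [← hT, h, Set.sUnion_empty]
    have hTfin : T.Finite := (Lfin w).subset (fun X hX => hX.1)
    obtain ⟨M0, hM0, hmax⟩ := Set.Finite.exists_maximalFor id T hTfin hTne
    have hUeq : bigU w k = M0 := by
      apply Set.Subset.antisymm
      · rintro φ ⟨Y, hY, hφ⟩
        rcases Lchain w M0 Y hM0.1 hY.1 with h | h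
        · have h9 : M0 = Y := Set.Subset.antisymm h (hmax hY h)
          rw [h9]
          exact hφ
        · exact h hφ
      · intro φ hφ
        exact ⟨M0, hM0, hφ⟩
    rw [hUeq]
    exact hM0.1
  -- the injection
  set f : M.W → Fin (S.card + 1) × Prop × (Fin (S.card + 1) → Finset {x // x ∈ S}) :=
    fun w =>
    (⟨(ℓ w).ncard, Nat.lt_succ_of_le (lcard w)⟩, (∅ ∈ LL w),
      fun k => gs4aux_enc S (bigU w k)) with hf
  have resp : ∀ w v, r w v → f w = f v := by
    intro w v h
    have h1 : ℓ w = ℓ v := h.1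
    have h2 : LL w = LL v := h.2
    rw [hf]
    simp only [h1, h2, hbigU]
  have hcore : ∀ w v, f w = f v → r w v := by
    intro w v hfeq
    rw [hf] at hfeq
    have h1 : (ℓ w).ncard = (ℓ v).ncard := congrArg (fun t : Fin (S.card + 1) × Prop × (Fin (S.card + 1) → Finset {x // x ∈ S}) => (t.1 : Fin _).val) hfeq
    have h2 : (∅ ∈ LL w) = (∅ ∈ LL v) := congrArg (fun t : Fin (S.card + 1) × Prop × (Fin (S.card + 1) → Finset {x // x ∈ S}) => t.2.1) hfeq
    have h3 : ∀ k : Fin (S.card + 1), bigU w k = bigU v k := by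
      intro k
      have := congrArg (fun t : Fin (S.card + 1) × Prop × (Fin (S.card + 1) → Finset {x // x ∈ S}) => t.2.2 k) hfeq
      exact gs4aux_enc_inj (bigUsub w k) (bigUsub v k) this
    have Lsubd : ∀ (a b : M.W), ((∅ ∈ LL a) = (∅ ∈ LL b)) →
        (∀ k : Fin (S.card + 1), bigU a k = bigU b k) → LL a ⊆ LL b := by
      intro a b ha hb X hX
      by_cases hXe : X = ∅
      · subst hXe
        exact ha ▸ hX
      · have hk : X.ncard < S.card + 1 := by
          have := Set.ncard_le_ncard (Lsub a X hX) Sfin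
          rw [Set.ncard_coe_finset] at this
          omega
        have hXa : bigU a ((⟨X.ncard, hk⟩ : Fin (S.card + 1)) : ℕ) = X := bigA a X hX
        have hXb : bigU b X.ncard = X := (hb ⟨X.ncard, hk⟩).symm.trans hXa
        rw [← hXb]
        apply bigC
        rw [hXb]
        exact hXe
    have hLeq : LL w = LL v :=
      Set.Subset.antisymm (Lsubd w v h2 h3) (Lsubd v w h2.symm (fun k => (h3 k).symm))
    have hleq : ℓ w = ℓ v := by
      have hw : bigU w (ℓ w).ncard = ℓ w := bigA w (ℓ w) (lmem w)
      have hv : bigU v (ℓ v).ncard = ℓ v := bigA v (ℓ v) (lmem v)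
      have hk : (ℓ w).ncard < S.card + 1 := Nat.lt_succ_of_le (lcard w)
      calc ℓ w = bigU w (ℓ w).ncard := hw.symm
        _ = bigU v (ℓ w).ncard := h3 ⟨(ℓ w).ncard, hk⟩
        _ = bigU v (ℓ v).ncard := by rw [h1]
        _ = ℓ v := hv
    exact ⟨hleq, hLeq⟩
  set F : Quot r → Fin (S.card + 1) × Prop × (Fin (S.card + 1) → Finset {x // x ∈ S}) :=
    Quot.lift f resp with hF
  have Finj : Function.Injective F := by
    intro x y h
    obtain ⟨w, rfl⟩ := Quot.exists_rep x
    obtain ⟨v, rfl⟩ := Quot.exists_rep y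
    exact (mkeq w v).2 (hcore w v h)
  have hfin : Finite (M.QuotModel r).W := Finite.of_injective F Finj
  refine ⟨depth, hfin, ?_⟩
  have hle : Nat.card (M.QuotModel r).W ≤
      Nat.card (Fin (S.card + 1) × Prop × (Fin (S.card + 1) → Finset {x // x ∈ S})) :=
    Nat.card_le_card_of_injective F Finj
  have hcardT2 : Nat.card (Fin (S.card + 1) × Prop × (Fin (S.card + 1) → Finset {x // x ∈ S}))
      = (S.card + 1) * 2 ^ (S.card * (S.card + 1) + 1) := by
    have h0 : Nat.card (Fin (S.card + 1) × Prop × (Fin (S.card + 1) → Finset {x // x ∈ S}))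
        = (S.card + 1) * (2 * (2 ^ S.card) ^ (S.card + 1)) := by
      simp [Nat.card_eq_fintype_card, Fintype.card_fun, Fintype.card_finset,
        Fintype.card_coe]
    rw [h0, ← pow_mul, ← pow_succ']
  rw [hcardT2] at hle
  exact hle
end

section
/- (1) If an L-formula φ is falsifiable (respectively, satisfiable) on a shallow CS4 frame, then φ is falsifiable (respectively, satisfiable) on a finite CS4 frame. (2) If φ is falsifiable (respectively, satisfiable) on a shallow, forest-like S4I frame, then φ is falsifiable (respectively, satisfiable) on a finite S4I frame. -/
universe u

section General

variable {M : KModel.{u}}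

lemma sat_mono (hM : M.IsBiInt) :
    ∀ (ψ : Fml) {w v : M.W}, M.le w v → M.Sat ψ w → M.Sat ψ v := by
  obtain ⟨lrefl, ltrans, srefl, strans, fle, fsq, vmono, fval⟩ := hM
  intro ψ
  induction ψ with
  | var p => intro w v h hs; exact vmono p w v hs h
  | bot => intro w v h hs; exact fle w v hs h
  | and a b iha ihb =>
      intro w v h hs
      exact ⟨iha h hs.1, ihb h hs.2⟩
  | or a b iha ihb =>
      intro w v h hs
      rcases hs with h1 | h1
      · exact Or.inl (iha h h1)
      · exact Or.inr (ihb h h1)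
  | imp a b iha ihb =>
      intro w v h hs x hx ha
      exact hs x (ltrans _ _ _ h hx) ha
  | dia a iha =>
      intro w v h hs u hu
      exact hs u (ltrans _ _ _ h hu)
  | box a iha =>
      intro w v h hs x y hx hy
      exact hs x y (ltrans _ _ _ h hx) hy

end General

namespace Fml

/-- subformulas -/
def subf : Fml → Finset Fml
  | .var p => {.var p}
  | .bot => {.bot}
  | .and a b => insert (.and a b) (subf a ∪ subf b)
  | .or a b => insert (.or a b) (subf a ∪ subf b)
  | .imp a b => insert (.imp a b) (subf a ∪ subf b)
  | .dia a => insert (.dia a) (subf a)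
  | .box a => insert (.box a) (subf a)

lemma mem_subf_self (φ : Fml) : φ ∈ subf φ := by
  cases φ <;> simp [subf]

lemma subf_trans : ∀ {φ ψ : Fml}, ψ ∈ subf φ → subf ψ ⊆ subf φ := by
  intro φ
  induction φ with
  | var p => intro ψ h; simp [subf] at h; subst h; simp [subf]
  | bot => intro ψ h; simp [subf] at h; subst h; simp [subf]
  | and a b iha ihb =>
      intro ψ h
      simp only [subf, Finset.mem_insert, Finset.mem_union] at h
      rcases h with h | h | h
      · subst h; exact subset_rfl
      · exact (iha h).trans (by intro x hx; simp [subf]; right; left; exact hx)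
      · exact (ihb h).trans (by intro x hx; simp [subf]; right; right; exact hx)
  | or a b iha ihb =>
      intro ψ h
      simp only [subf, Finset.mem_insert, Finset.mem_union] at h
      rcases h with h | h | h
      · subst h; exact subset_rfl
      · exact (iha h).trans (by intro x hx; simp [subf]; right; left; exact hx)
      · exact (ihb h).trans (by intro x hx; simp [subf]; right; right; exact hx)
  | imp a b iha ihb =>
      intro ψ h
      simp only [subf, Finset.mem_insert, Finset.mem_union] at h
      rcases h with h | h | h
      · subst h; exact subset_rfl
      · exact (iha h).trans (by intro x hx; simp [subf]; right; left; exact hx)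
      · exact (ihb h).trans (by intro x hx; simp [subf]; right; right; exact hx)
  | dia a iha =>
      intro ψ h
      simp only [subf, Finset.mem_insert] at h
      rcases h with h | h
      · subst h; exact subset_rfl
      · exact (iha h).trans (by intro x hx; simp [subf]; right; exact hx)
  | box a iha =>
      intro ψ h
      simp only [subf, Finset.mem_insert] at h
      rcases h with h | h
      · subst h; exact subset_rfl
      · exact (iha h).trans (by intro x hx; simp [subf]; right; exact hx)

lemma and_mem_subf {φ a b : Fml} (h : Fml.and a b ∈ subf φ) :
    a ∈ subf φ ∧ b ∈ subf φ := by
  have := subf_trans h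
  constructor
  · exact this (by simp [subf, mem_subf_self])
  · exact this (by simp [subf, mem_subf_self])

lemma or_mem_subf {φ a b : Fml} (h : Fml.or a b ∈ subf φ) :
    a ∈ subf φ ∧ b ∈ subf φ := by
  have := subf_trans h
  constructor
  · exact this (by simp [subf, mem_subf_self])
  · exact this (by simp [subf, mem_subf_self])

lemma imp_mem_subf {φ a b : Fml} (h : Fml.imp a b ∈ subf φ) :
    a ∈ subf φ ∧ b ∈ subf φ := by
  have := subf_trans h
  constructor
  · exact this (by simp [subf, mem_subf_self])
  · exact this (by simp [subf, mem_subf_self])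

lemma dia_mem_subf {φ a : Fml} (h : Fml.dia a ∈ subf φ) : a ∈ subf φ :=
  subf_trans h (by simp [subf, mem_subf_self])

lemma box_mem_subf {φ a : Fml} (h : Fml.box a ∈ subf φ) : a ∈ subf φ :=
  subf_trans h (by simp [subf, mem_subf_self])

end Fml

open scoped Classical

noncomputable section CS4sec

variable (M : KModel.{u}) (φ : Fml)

/-- the theory of a world -/
def th (w : M.W) : Finset Fml := φ.subf.filter (fun ψ => M.Sat ψ w)

/-- locally witnessed formulas -/
def wit (w : M.W) : Finset Fml :=
  φ.subf.filter (fun ψ => ∃ x, M.sq w x ∧ M.Sat ψ x)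

variable {M φ}

lemma mem_th {ψ : Fml} {w : M.W} : ψ ∈ th M φ w ↔ ψ ∈ φ.subf ∧ M.Sat ψ w :=
  Finset.mem_filter

lemma mem_wit {ψ : Fml} {w : M.W} :
    ψ ∈ wit M φ w ↔ ψ ∈ φ.subf ∧ ∃ x, M.sq w x ∧ M.Sat ψ x :=
  Finset.mem_filter

lemma th_subset (w : M.W) : th M φ w ⊆ φ.subf := Finset.filter_subset _ _

lemma wit_subset (w : M.W) : wit M φ w ⊆ φ.subf := Finset.filter_subset _ _

variable (M φ)

/-- worlds of the finite CS4 model -/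
def CW : Set (Finset Fml × Finset Fml) :=
  {p | (∃ w, p.1 = th M φ w ∧ wit M φ w ⊆ p.2) ∧ p.2 ⊆ φ.subf}

/-- the finite CS4 model -/
def CN : KModel.{0} where
  W := CW M φ
  fallible := {f | Fml.bot ∈ f.1.1}
  le := fun f g => f.1.1 ⊆ g.1.1 ∧
    ∀ a b, Fml.imp a b ∈ f.1.1 → a ∈ g.1.1 → b ∈ g.1.1
  sq := fun f g => (∀ a, Fml.box a ∈ f.1.1 → a ∈ g.1.1 ∧ Fml.box a ∈ g.1.1) ∧
    (Fml.bot ∈ f.1.1 → Fml.bot ∈ g.1.1) ∧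
    g.1.2 ⊆ f.1.2 ∧ (∀ a, Fml.dia a ∈ φ.subf → a ∈ g.1.1 → a ∈ f.1.2)
  val := fun p => {f | Fml.var p ∈ φ.subf → Fml.var p ∈ f.1.1}

variable {M φ}

section CS4lemmas

/-- the canonical world of `w` -/
def cworld (w : M.W) : CW M φ :=
  ⟨(th M φ w, wit M φ w), ⟨w, rfl, subset_rfl⟩, wit_subset w⟩

lemma cworld_fst (w : M.W) : (cworld (M := M) (φ := φ) w).1.1 = th M φ w := rfl


variable (hM : M.IsCS4)
include hM

lemma th_mono {w v : M.W} (h : M.le w v) : th M φ w ⊆ th M φ v := by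
  intro ψ hψ
  rw [mem_th] at hψ ⊢
  exact ⟨hψ.1, sat_mono hM.1 ψ h hψ.2⟩

omit hM in
lemma th_imp_clause {w v : M.W} (h : M.le w v) {a b : Fml}
    (hab : Fml.imp a b ∈ th M φ w) (ha : a ∈ th M φ v) : b ∈ th M φ v := by
  rw [mem_th] at hab ha ⊢
  refine ⟨(Fml.imp_mem_subf hab.1).2, ?_⟩
  exact hab.2 v h ha.2

lemma th_box_sq {u v : M.W} (h : M.sq u v) {a : Fml}
    (ha : Fml.box a ∈ th M φ u) : a ∈ th M φ v ∧ Fml.box a ∈ th M φ v := by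
  obtain ⟨⟨lrefl, ltrans, srefl, strans, fle, fsq, vmono, fval⟩, backup⟩ := hM
  rw [mem_th] at ha
  constructor
  · rw [mem_th]
    exact ⟨Fml.box_mem_subf ha.1, ha.2 u v (lrefl u) h⟩
  · rw [mem_th]
    refine ⟨ha.1, ?_⟩
    intro x y hx hy
    obtain ⟨u', hu'1, hu'2⟩ := backup u v x h hx
    exact ha.2 u' y hu'1 (strans _ _ _ hu'2 hy)

lemma th_bot_sq {u v : M.W} (h : M.sq u v)
    (hb : Fml.bot ∈ th M φ u) : Fml.bot ∈ th M φ v := by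
  rw [mem_th] at hb ⊢
  exact ⟨hb.1, hM.1.2.2.2.2.2.1 u v hb.2 h⟩

lemma wit_anti {u v : M.W} (h : M.sq u v) : wit M φ v ⊆ wit M φ u := by
  intro ψ hψ
  rw [mem_wit] at hψ ⊢
  obtain ⟨h1, x, hx1, hx2⟩ := hψ
  exact ⟨h1, x, hM.1.2.2.2.1 _ _ _ h hx1, hx2⟩

omit hM in
lemma th_to_wit {u v : M.W} (h : M.sq u v) {a : Fml}
    (ha : a ∈ th M φ v) : a ∈ wit M φ u := by
  rw [mem_th] at ha
  rw [mem_wit]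
  exact ⟨ha.1, v, h, ha.2⟩

/-- real le edges give edges of `CN` (only the theory component matters) -/
lemma real_le {w v : M.W} (h : M.le w v) {f g : CW M φ}
    (hf : f.1.1 = th M φ w) (hg : g.1.1 = th M φ v) : (CN M φ).le f g := by
  constructor
  · rw [hf, hg]; exact th_mono hM h
  · intro a b hab ha
    rw [hf] at hab
    rw [hg] at ha ⊢
    rw [mem_th] at hab
    exact th_imp_clause (hM.1.1 v) (by rw [mem_th]; exact ⟨hab.1, sat_mono hM.1 _ h hab.2⟩) ha

/-- real sq edges give sq edges of `CN` -/
lemma real_sq {u v : M.W} (h : M.sq u v) {g k : CW M φ}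
    (hg : g.1.1 = th M φ u) (hgw : wit M φ u ⊆ g.1.2)
    (hk1 : k.1.1 = th M φ v) (hk2 : k.1.2 = wit M φ v) : (CN M φ).sq g k := by
  refine ⟨?_, ?_, ?_, ?_⟩
  · intro a ha
    rw [hg] at ha; rw [hk1]
    exact th_box_sq hM h ha
  · intro hb
    rw [hg] at hb; rw [hk1]
    exact th_bot_sq hM h hb
  · rw [hk2]
    exact (wit_anti hM h).trans hgw
  · intro a _ ha
    rw [hk1] at ha
    exact hgw (th_to_wit h ha)

/-- Truth lemma for the CS4 construction. -/
lemma ctruth : ∀ ψ, ψ ∈ φ.subf → ∀ f : CW M φ, ((CN M φ).Sat ψ f ↔ ψ ∈ f.1.1) := by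
  have hbi := hM.1
  intro ψ
  induction ψ with
  | var p =>
      intro hsub f
      show (Fml.var p ∈ φ.subf → Fml.var p ∈ f.1.1) ↔ _
      constructor
      · intro h; exact h hsub
      · intro h _; exact h
  | bot =>
      intro hsub f
      exact Iff.rfl
  | and a b iha ihb =>
      intro hsub f
      obtain ⟨⟨w, hw1, _⟩, _⟩ := f.2
      have ha := (Fml.and_mem_subf hsub).1
      have hb := (Fml.and_mem_subf hsub).2
      show (CN M φ).Sat a f ∧ (CN M φ).Sat b f ↔ _
      rw [iha ha f, ihb hb f, hw1]
      simp only [mem_th]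
      constructor
      · rintro ⟨⟨_, h1⟩, ⟨_, h2⟩⟩; exact ⟨hsub, h1, h2⟩
      · rintro ⟨_, h1, h2⟩; exact ⟨⟨ha, h1⟩, ⟨hb, h2⟩⟩
  | or a b iha ihb =>
      intro hsub f
      obtain ⟨⟨w, hw1, _⟩, _⟩ := f.2
      have ha := (Fml.or_mem_subf hsub).1
      have hb := (Fml.or_mem_subf hsub).2
      show (CN M φ).Sat a f ∨ (CN M φ).Sat b f ↔ _
      rw [iha ha f, ihb hb f, hw1]
      simp only [mem_th]
      constructor
      · rintro (⟨_, h1⟩ | ⟨_, h1⟩)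
        · exact ⟨hsub, Or.inl h1⟩
        · exact ⟨hsub, Or.inr h1⟩
      · rintro ⟨_, h1 | h1⟩
        · exact Or.inl ⟨ha, h1⟩
        · exact Or.inr ⟨hb, h1⟩
  | imp a b iha ihb =>
      intro hsub f
      obtain ⟨⟨w, hw1, _⟩, _⟩ := f.2
      have ha := (Fml.imp_mem_subf hsub).1
      have hb := (Fml.imp_mem_subf hsub).2
      constructor
      · intro hs
        by_contra hmem
        rw [hw1, mem_th] at hmem
        have : ¬ M.Sat (Fml.imp a b) w := fun h => hmem ⟨hsub, h⟩
        simp only [KModel.Sat] at this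
        push_neg at this
        obtain ⟨v, hv1, hv2, hv3⟩ := this
        have hle : (CN M φ).le f (cworld v) := real_le hM hv1 hw1 rfl
        have hsa : (CN M φ).Sat a (cworld v) := by
          rw [iha ha, cworld_fst, mem_th]; exact ⟨ha, hv2⟩
        have hsb := hs (cworld v) hle hsa
        rw [ihb hb, cworld_fst, mem_th] at hsb
        exact hv3 hsb.2
      · intro hmem g hle hsa
        rw [iha ha g] at hsa
        rw [ihb hb g]
        exact hle.2 a b hmem hsa
  | dia a iha =>
      intro hsub f
      obtain ⟨⟨w, hw1, _⟩, _⟩ := f.2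
      have ha := Fml.dia_mem_subf hsub
      constructor
      · intro hs
        by_contra hmem
        rw [hw1, mem_th] at hmem
        have : ¬ M.Sat (Fml.dia a) w := fun h => hmem ⟨hsub, h⟩
        simp only [KModel.Sat] at this
        push_neg at this
        obtain ⟨u, hu1, hu2⟩ := this
        have hle : (CN M φ).le f (cworld u) := real_le hM hu1 hw1 rfl
        obtain ⟨k, hk1, hk2⟩ := hs (cworld u) hle
        rw [iha ha k] at hk2
        have : a ∈ (cworld (M := M) (φ := φ) u).1.2 := hk1.2.2.2 a hsub hk2
        rw [show (cworld (M := M) (φ := φ) u).1.2 = wit M φ u from rfl, mem_wit] at this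
        obtain ⟨_, x, hx1, hx2⟩ := this
        exact hu2 x hx1 hx2
      · intro hmem g hle
        obtain ⟨⟨u, hu1, hu2⟩, _⟩ := g.2
        have hmem' : Fml.dia a ∈ th M φ u := by
          rw [← hu1]; exact hle.1 hmem
        rw [mem_th] at hmem'
        obtain ⟨v, hv1, hv2⟩ := hmem'.2 u (hbi.1 u)
        refine ⟨cworld v, real_sq hM hv1 hu1 hu2 rfl rfl, ?_⟩
        rw [iha ha, cworld_fst, mem_th]
        exact ⟨ha, hv2⟩
  | box a iha =>
      intro hsub f
      obtain ⟨⟨w, hw1, _⟩, _⟩ := f.2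
      have ha := Fml.box_mem_subf hsub
      constructor
      · intro hs
        by_contra hmem
        rw [hw1, mem_th] at hmem
        have : ¬ M.Sat (Fml.box a) w := fun h => hmem ⟨hsub, h⟩
        simp only [KModel.Sat] at this
        push_neg at this
        obtain ⟨u, v, hu, hv, hva⟩ := this
        have hle : (CN M φ).le f (cworld u) := real_le hM hu hw1 rfl
        have hsq : (CN M φ).sq (cworld u) (cworld v) :=
          real_sq hM hv rfl subset_rfl rfl rfl
        have := hs (cworld u) (cworld v) hle hsq
        rw [iha ha, cworld_fst, mem_th] at this
        exact hva this.2
      · intro hmem g k hle hsq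
        rw [iha ha k]
        exact (hsq.1 a (hle.1 hmem)).1

/-- `CN` is a CS4 model. -/
lemma CN_isCS4 : (CN M φ).IsCS4 := by
  have hbi := hM.1
  refine ⟨⟨?_, ?_, ?_, ?_, ?_, ?_, ?_, ?_⟩, ?_⟩
  · -- le refl
    intro f
    obtain ⟨⟨w, hw1, _⟩, _⟩ := f.2
    refine ⟨subset_rfl, ?_⟩
    intro a b hab ha
    rw [hw1] at hab ha ⊢
    exact th_imp_clause (hbi.1 w) hab ha
  · -- le trans
    rintro f g h ⟨h1, h2⟩ ⟨h3, h4⟩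
    exact ⟨h1.trans h3, fun a b hab ha => h4 a b (h1 hab) ha⟩
  · -- sq refl
    intro f
    obtain ⟨⟨w, hw1, hw2⟩, _⟩ := f.2
    refine ⟨?_, fun h => h, subset_rfl, ?_⟩
    · intro a ha
      rw [hw1] at ha ⊢
      exact ⟨(th_box_sq hM (hbi.2.2.1 w) ha).1, ha⟩
    · intro a _ ha
      rw [hw1] at ha
      exact hw2 (th_to_wit (hbi.2.2.1 w) ha)
  · -- sq trans
    rintro f g h ⟨h1, h2, h3, h4⟩ ⟨h5, h6, h7, h8⟩
    refine ⟨?_, fun hb => h6 (h2 hb), h7.trans h3, ?_⟩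
    · intro a ha
      obtain ⟨ha1, ha2⟩ := h1 a ha
      exact ⟨(h5 a ha2).1, (h5 a ha2).2⟩
    · intro a hda ha
      exact h3 (h8 a hda ha)
  · -- fallible le
    intro f g hf hle
    exact hle.1 hf
  · -- fallible sq
    intro f g hf hsq
    exact hsq.2.1 hf
  · -- val mono
    intro p f g hf hle hsub
    exact hle.1 (hf hsub)
  · -- fallible ⊆ val
    intro p f hf hsub
    obtain ⟨⟨w, hw1, _⟩, _⟩ := f.2
    have hb : Fml.bot ∈ th M φ w := by rw [← hw1]; exact hf
    rw [mem_th] at hb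
    rw [hw1, mem_th]
    exact ⟨hsub, hbi.2.2.2.2.2.2.2 p w hb.2⟩
  · -- BackUp
    rintro f g h ⟨h1, h2, h3, h4⟩ ⟨h5, h6⟩
    obtain ⟨⟨w, hw1, hw2⟩, hfs⟩ := f.2
    have hmem : ((f.1.1, f.1.2 ∪ h.1.2 ∪ h.1.1) : Finset Fml × Finset Fml) ∈ CW M φ := by
      constructor
      · exact ⟨w, hw1, hw2.trans (Finset.subset_union_left.trans Finset.subset_union_left)⟩
      · intro x hx
        rcases Finset.mem_union.1 hx with hx | hx
        · rcases Finset.mem_union.1 hx with hx | hx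
          · exact hfs hx
          · exact h.2.2 hx
        · obtain ⟨⟨v, hv1, _⟩, _⟩ := h.2
          rw [hv1] at hx
          exact th_subset v hx
    refine ⟨⟨_, hmem⟩, ?_, ?_, ?_, ?_, ?_⟩
    · refine ⟨subset_rfl, ?_⟩
      intro a b hab ha
      rw [hw1] at hab ha ⊢
      exact th_imp_clause (hbi.1 w) hab ha
    · intro a ha
      obtain ⟨ha1, ha2⟩ := h1 a ha
      exact ⟨h5 ha1, h5 ha2⟩
    · intro hb
      exact h5 (h2 hb)
    · intro x hx
      exact Finset.mem_union_left _ (Finset.mem_union_right _ hx)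
    · intro a _ ha
      exact Finset.mem_union_right _ ha

omit hM in
lemma CN_finite : Finite (CN M φ).W := by
  have : CW M φ ⊆ ↑(φ.subf.powerset ×ˢ φ.subf.powerset) := by
    rintro ⟨t, X⟩ ⟨⟨w, hw1, _⟩, h2⟩
    simp only [Finset.coe_product, Set.mem_prod, Finset.mem_coe, Finset.mem_powerset]
    exact ⟨by rw [show t = th M φ w from hw1]; exact th_subset w, h2⟩
  exact ((Finset.finite_toSet _).subset this).to_subtype

/-- packaged CS4 result -/
lemma cs4_package (w : M.W) (hw : w ∉ M.fallible) :
    ∃ (N : KModel.{0}) (v : N.W), N.IsCS4 ∧ Finite N.W ∧ v ∉ N.fallible ∧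
      (N.Sat φ v ↔ M.Sat φ w) := by
  refine ⟨CN M φ, cworld w, CN_isCS4 hM, CN_finite, ?_, ?_⟩
  · intro hmem
    have : Fml.bot ∈ th M φ w := hmem
    rw [mem_th] at this
    exact hw this.2
  · rw [ctruth hM φ (Fml.mem_subf_self φ) (cworld w), cworld_fst, mem_th]
    constructor
    · exact fun h => h.2
    · exact fun h => ⟨Fml.mem_subf_self φ, h⟩

end CS4lemmas

end CS4sec

noncomputable section S4Isec

open scoped Classical

variable {M : KModel.{u}} {n : ℕ}

section RkDep

variable (M n)

/-- chains -/
def IsCh (c : ℕ → M.W) (m : ℕ) : Prop := ∀ i < m, M.Slt (c i) (c (i+1))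

def rkSet (w : M.W) : Set ℕ := {m | ∃ c : ℕ → M.W, IsCh M c m ∧ c m = w}

def depSet (w : M.W) : Set ℕ := {m | ∃ c : ℕ → M.W, IsCh M c m ∧ c 0 = w}

def rk (w : M.W) : ℕ := sSup (rkSet M w)

def dep (w : M.W) : ℕ := sSup (depSet M w)

variable {M n}

variable (hdep : M.DepthLE n)

lemma rkSet_nonempty (w : M.W) : (rkSet M w).Nonempty :=
  ⟨0, fun _ => w, fun i hi => absurd hi (Nat.not_lt_zero i), rfl⟩

lemma depSet_nonempty (w : M.W) : (depSet M w).Nonempty :=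
  ⟨0, fun _ => w, fun i hi => absurd hi (Nat.not_lt_zero i), rfl⟩

include hdep in
lemma rkSet_bdd (w : M.W) : ∀ m ∈ rkSet M w, m ≤ n := by
  rintro m ⟨c, hc, _⟩
  exact hdep m c hc

include hdep in
lemma depSet_bdd (w : M.W) : ∀ m ∈ depSet M w, m ≤ n := by
  rintro m ⟨c, hc, _⟩
  exact hdep m c hc

include hdep in
lemma rk_le_n (w : M.W) : rk M w ≤ n :=
  csSup_le (rkSet_nonempty w) (rkSet_bdd hdep w)

include hdep in
lemma dep_le_n (w : M.W) : dep M w ≤ n :=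
  csSup_le (depSet_nonempty w) (depSet_bdd hdep w)

include hdep in
lemma rk_mem (w : M.W) : rk M w ∈ rkSet M w :=
  Nat.sSup_mem (rkSet_nonempty w) ⟨n, rkSet_bdd hdep w⟩

include hdep in
lemma dep_mem (w : M.W) : dep M w ∈ depSet M w :=
  Nat.sSup_mem (depSet_nonempty w) ⟨n, depSet_bdd hdep w⟩

include hdep in
lemma le_rk {w : M.W} {m : ℕ} (h : m ∈ rkSet M w) : m ≤ rk M w :=
  le_csSup ⟨n, rkSet_bdd hdep w⟩ h

include hdep in
lemma le_dep {w : M.W} {m : ℕ} (h : m ∈ depSet M w) : m ≤ dep M w :=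
  le_csSup ⟨n, depSet_bdd hdep w⟩ h

variable (hbi : M.IsBiInt)

include hbi in
lemma le_of_chain {c : ℕ → M.W} {m : ℕ} (hc : IsCh M c m) :
    ∀ i j, i ≤ j → j ≤ m → M.le (c i) (c j) := by
  intro i j hij hjm
  obtain ⟨d, rfl⟩ := Nat.exists_eq_add_of_le hij
  clear hij
  induction d with
  | zero => exact hbi.1 (c i)
  | succ d ih =>
      have h1 : i + d < m := by omega
      have h2 := (hc _ h1).1
      have := ih (by omega)
      exact hbi.2.1 _ _ _ this (by rw [show i + (d+1) = (i+d)+1 by omega]; exact h2)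

include hbi in
lemma slt_le_slt {x u v : M.W} (h1 : M.Slt x u) (h2 : M.le u v) : M.Slt x v := by
  refine ⟨hbi.2.1 _ _ _ h1.1 h2, fun h => h1.2 (hbi.2.1 _ _ _ h2 h)⟩

include hdep hbi in
lemma rk_le_of_le {u v : M.W} (h : M.le u v) : rk M u ≤ rk M v := by
  obtain ⟨c, hc, hce⟩ := rk_mem hdep u
  set m := rk M u with hm
  rcases Nat.eq_zero_or_pos m with h0 | hpos
  · omega
  · refine le_rk hdep ⟨fun i => if i < m then c i else v, ?_, by simp⟩
    intro i hi
    by_cases h1 : i + 1 < m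
    · simpa [Nat.lt_of_succ_lt h1, h1] using hc i (by omega)
    · have hi1 : i + 1 = m := by omega
      have hstep := hc i (by omega)
      rw [hi1, hce] at hstep
      simpa [show i < m by omega, show ¬ (i + 1 < m) by omega, hi1]
        using slt_le_slt hbi hstep h

include hdep hbi in
lemma rk_lt_of_slt {u v : M.W} (h : M.Slt u v) : rk M u < rk M v := by
  obtain ⟨c, hc, hce⟩ := rk_mem hdep u
  set m := rk M u with hm
  have : m + 1 ∈ rkSet M v := by
    refine ⟨fun i => if i ≤ m then c i else v, ?_, by simp⟩
    intro i hi
    by_cases h1 : i < m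
    · simpa [Nat.le_of_lt h1, Nat.succ_le_of_lt h1] using hc i h1
    · have : i = m := by omega
      subst this
      simpa [hce] using h
  have := le_rk hdep this
  omega

include hdep hbi in
lemma rk_cluster {u v : M.W} (h1 : M.le u v) (h2 : M.le v u) : rk M u = rk M v :=
  le_antisymm (rk_le_of_le hdep hbi h1) (rk_le_of_le hdep hbi h2)

include hdep hbi in
lemma cluster_of_rk_eq {u v : M.W} (h1 : M.le u v) (h2 : rk M u = rk M v) :
    M.le v u := by
  by_contra h
  have := rk_lt_of_slt hdep hbi ⟨h1, h⟩
  omega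

include hdep hbi in
lemma rk_realize {v : M.W} {j : ℕ} (hj : j ≤ rk M v) :
    ∃ z, M.le z v ∧ rk M z = j := by
  obtain ⟨c, hc, hce⟩ := rk_mem hdep v
  set m := rk M v with hm
  refine ⟨c j, by rw [← hce]; exact le_of_chain hbi hc j m hj le_rfl, ?_⟩
  have hge : j ≤ rk M (c j) :=
    le_rk hdep ⟨c, fun i hi => hc i (by omega), rfl⟩
  rcases Nat.eq_or_lt_of_le hj with hjm | hjm
  · have hcv : c j = v := by rw [hjm]; exact hce
    rw [hcv]
    omega
  · -- j < m
    by_contra hne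
    have hgt : j < rk M (c j) := by omega
    obtain ⟨e, he, hee⟩ := rk_mem hdep (c j)
    set r := rk M (c j) with hr
    have hmem : r + (m - j) ∈ rkSet M v := by
      refine ⟨fun i => if i ≤ r then e i else c (j + (i - r)), ?_, ?_⟩
      · intro i hi
        by_cases h1 : i + 1 ≤ r
        · simpa [Nat.le_of_succ_le h1, h1] using he i (by omega)
        · by_cases h2 : i ≤ r
          · have hir : i = r := by omega
            rw [hir]
            have h3 : j + (r + 1 - r) = j + 1 := by omega
            simpa [hee, h3, show ¬ (r + 1 ≤ r) by omega] using hc j hjm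
          · have harg : j + (i - r) < m := by omega
            have : j + (i + 1 - r) = (j + (i - r)) + 1 := by omega
            simpa [h1, h2, this] using hc _ harg
      · simp only [show ¬ (r + (m - j) ≤ r) by omega, if_false]
        rw [show j + (r + (m - j) - r) = m by omega, hce]
    have := le_rk hdep hmem
    omega

include hdep hbi in
lemma dep_lt_of_slt {w z : M.W} (h : M.Slt w z) : dep M z < dep M w := by
  obtain ⟨e, he, hee⟩ := dep_mem hdep z
  set r := dep M z with hr
  have hmem : r + 1 ∈ depSet M w := by
    refine ⟨fun i => if i = 0 then w else e (i - 1), ?_, by simp⟩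
    intro i hi
    rcases Nat.eq_zero_or_pos i with h0 | h0
    · subst h0
      simpa [hee] using h
    · have : i - 1 < r := by omega
      have hstep := he (i-1) this
      have h1 : i - 1 + 1 = i := by omega
      rw [h1] at hstep
      simpa [show i ≠ 0 by omega, show i + 1 ≠ 0 by omega, show i + 1 - 1 = i by omega]
        using hstep
  have := le_dep hdep hmem
  omega

end RkDep

section Types

/-- iterated type universes for `le`-types -/
def AT : ℕ → Type
  | 0 => PUnit
  | k+1 => Finset Fml × Set (Finset Fml) × Set (AT k)

variable (M n)

/-- immediate strict successor (next cluster) -/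
def nxt (w z : M.W) : Prop := M.Slt w z ∧ rk M z = rk M w + 1

variable (φ : Fml)

/-- theories of the cluster of `w` -/
def clth (w : M.W) : Set (Finset Fml) :=
  {t | ∃ z, M.le w z ∧ M.le z w ∧ t = th M φ z}

/-- fueled `le`-types -/
def cfun : (k : ℕ) → M.W → AT k
  | 0, _ => PUnit.unit
  | (k+1), w => (th M φ w, clth M φ w, {a | ∃ z, nxt M w z ∧ a = cfun k z})

lemma cfun_succ (k : ℕ) (w : M.W) :
    cfun M φ (k+1) w =
      (th M φ w, clth M φ w, {a | ∃ z, nxt M w z ∧ a = cfun M φ k z}) := rfl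

variable {M n φ}

lemma cfun_parts {k : ℕ} {w w' : M.W} (h : cfun M φ (k+1) w = cfun M φ (k+1) w') :
    th M φ w = th M φ w' ∧ clth M φ w = clth M φ w' ∧
      ({a | ∃ z, nxt M w z ∧ a = cfun M φ k z} =
        {a | ∃ z, nxt M w' z ∧ a = cfun M φ k z}) := by
  rw [cfun_succ, cfun_succ] at h
  change ((_ : Finset Fml × Set (Finset Fml) × Set (AT k)) = _) at h
  rw [Prod.ext_iff, Prod.ext_iff] at h
  exact ⟨h.1, h.2.1, h.2.2⟩

variable (hdep : M.DepthLE n) (hbi : M.IsBiInt)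

include hdep hbi in
/-- stability of fueled types beyond the depth -/
lemma stab : ∀ (d : ℕ) (w : M.W), dep M w ≤ d →
    ∀ (k : ℕ) (w' : M.W), dep M w ≤ k → cfun M φ (k+1) w = cfun M φ (k+1) w' →
    ∀ m, k ≤ m → cfun M φ (m+1) w = cfun M φ (m+1) w' := by
  intro d
  induction d with
  | zero =>
      intro w _ k w' hk heq m hm
      obtain ⟨h1, h2, h3⟩ := cfun_parts heq
      have hnosucc : ∀ z, ¬ nxt M w z := by
        intro z hz
        have := dep_lt_of_slt hdep hbi hz.1
        omega
      have hempty : {a | ∃ z, nxt M w z ∧ a = cfun M φ k z} = (∅ : Set (AT k)) := by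
        ext a; simp only [Set.mem_setOf_eq, Set.mem_empty_iff_false, iff_false]
        rintro ⟨z, hz, _⟩; exact hnosucc z hz
      have hnosucc' : ∀ z, ¬ nxt M w' z := by
        intro z hz
        have : cfun M φ k z ∈ ({} : Set (AT k)) := by
          rw [← hempty, h3]; exact ⟨z, hz, rfl⟩
        exact this
      rw [cfun_succ, cfun_succ]
      show ((_ : Finset Fml × Set (Finset Fml) × Set (AT m)) = _)
      rw [Prod.ext_iff, Prod.ext_iff]
      refine ⟨h1, h2, ?_⟩
      ext a
      simp only [Set.mem_setOf_eq]
      constructor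
      · rintro ⟨z, hz, _⟩; exact absurd hz (hnosucc z)
      · rintro ⟨z, hz, _⟩; exact absurd hz (hnosucc' z)
  | succ d ih =>
      intro w hw k w' hk heq m hm
      obtain ⟨h1, h2, h3⟩ := cfun_parts heq
      rw [cfun_succ, cfun_succ]
      show ((_ : Finset Fml × Set (Finset Fml) × Set (AT m)) = _)
      rw [Prod.ext_iff, Prod.ext_iff]
      refine ⟨h1, h2, ?_⟩
      by_cases hzero : ∀ z, ¬ nxt M w z
      · have hempty : {a | ∃ z, nxt M w z ∧ a = cfun M φ k z} = (∅ : Set (AT k)) := by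
          ext a; simp only [Set.mem_setOf_eq, Set.mem_empty_iff_false, iff_false]
          rintro ⟨z, hz, _⟩; exact hzero z hz
        have hnosucc' : ∀ z, ¬ nxt M w' z := by
          intro z hz
          have : cfun M φ k z ∈ ({} : Set (AT k)) := by
            rw [← hempty, h3]; exact ⟨z, hz, rfl⟩
          exact this
        ext a
        simp only [Set.mem_setOf_eq]
        constructor
        · rintro ⟨z, hz, _⟩; exact absurd hz (hzero z)
        · rintro ⟨z, hz, _⟩; exact absurd hz (hnosucc' z)
      · push_neg at hzero
        obtain ⟨z₀, hz₀⟩ := hzero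
        have hk1 : 1 ≤ k := by
          have := dep_lt_of_slt hdep hbi hz₀.1
          omega
        obtain ⟨k', rfl⟩ : ∃ k', k = k' + 1 := ⟨k - 1, by omega⟩
        obtain ⟨m', rfl⟩ : ∃ m', m = m' + 1 := ⟨m - 1, by omega⟩
        ext a
        simp only [Set.mem_setOf_eq]
        constructor
        · rintro ⟨z, hz, rfl⟩
          have hmem : cfun M φ (k'+1) z ∈
              {a | ∃ z', nxt M w' z' ∧ a = cfun M φ (k'+1) z'} := by
            rw [← h3]; exact ⟨z, hz, rfl⟩
          obtain ⟨z', hz', hzz⟩ := hmem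
          have hds := dep_lt_of_slt hdep hbi hz.1
          have := ih z (by omega) k' z' (by omega) hzz m' (by omega)
          exact ⟨z', hz', this⟩
        · rintro ⟨z', hz', rfl⟩
          have hmem : cfun M φ (k'+1) z' ∈
              {a | ∃ z, nxt M w z ∧ a = cfun M φ (k'+1) z} := by
            rw [h3]; exact ⟨z', hz', rfl⟩
          obtain ⟨z, hz, hzz⟩ := hmem
          have hds := dep_lt_of_slt hdep hbi hz.1
          have := ih z (by omega) k' z' (by omega) hzz.symm m' (by omega)
          exact ⟨z, hz, this.symm⟩

end Types

section TB

/-- branch data: types of predecessors at each rank -/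
def Fc (M : KModel.{u}) (φ : Fml) (n : ℕ) (w : M.W) : ℕ → Set (AT (n+1)) :=
  fun i => {a | ∃ z, M.le z w ∧ rk M z = i ∧ a = cfun M φ (n+1) z}

/-- the full type of a world -/
def tB (M : KModel.{u}) (φ : Fml) (n : ℕ) (w : M.W) :
    AT (n+1) × ℕ × (ℕ → Set (AT (n+1))) :=
  (cfun M φ (n+1) w, rk M w, Fc M φ n w)

variable {φ : Fml}

lemma tB_eq_iff {w w' : M.W} : tB M φ n w = tB M φ n w' ↔
    (cfun M φ (n+1) w = cfun M φ (n+1) w' ∧ rk M w = rk M w' ∧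
      Fc M φ n w = Fc M φ n w') := by
  constructor
  · intro h
    exact ⟨congrArg Prod.fst h, congrArg (fun x => x.2.1) h,
      congrArg (fun x => x.2.2) h⟩
  · rintro ⟨h1, h2, h3⟩
    rw [tB, tB, h1, h2, h3]

lemma tB_parts {w w' : M.W} (h : tB M φ n w = tB M φ n w') :
    cfun M φ (n+1) w = cfun M φ (n+1) w' ∧ rk M w = rk M w' ∧
      Fc M φ n w = Fc M φ n w' := tB_eq_iff.1 h

lemma tB_th {w w' : M.W} (h : tB M φ n w = tB M φ n w') :
    th M φ w = th M φ w' :=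
  (cfun_parts (tB_parts h).1).1

variable (hdep : M.DepthLE n) (hbi : M.IsBiInt) (hforest : M.ForestLike)

include hbi in
lemma clth_cluster {w z : M.W} (h1 : M.le w z) (h2 : M.le z w) :
    clth M φ w = clth M φ z := by
  ext t
  constructor
  · rintro ⟨y, hy1, hy2, rfl⟩
    exact ⟨y, hbi.2.1 _ _ _ h2 hy1, hbi.2.1 _ _ _ hy2 h1, rfl⟩
  · rintro ⟨y, hy1, hy2, rfl⟩
    exact ⟨y, hbi.2.1 _ _ _ h1 hy1, hbi.2.1 _ _ _ hy2 h2, rfl⟩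

include hdep hbi in
lemma nxt_cluster {w m y : M.W} (h1 : M.le w m) (h2 : M.le m w) :
    nxt M m y ↔ nxt M w y := by
  have hrk := rk_cluster hdep hbi h1 h2
  constructor
  · rintro ⟨⟨hs1, hs2⟩, hr⟩
    exact ⟨⟨hbi.2.1 _ _ _ h1 hs1, fun h => hs2 (hbi.2.1 _ _ _ h h1)⟩, by omega⟩
  · rintro ⟨⟨hs1, hs2⟩, hr⟩
    exact ⟨⟨hbi.2.1 _ _ _ h2 hs1, fun h => hs2 (hbi.2.1 _ _ _ h h2)⟩, by omega⟩

include hdep hbi in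
lemma cfun_cluster_val {z m : M.W} (h1 : M.le z m) (h2 : M.le m z) :
    cfun M φ (n+1) m =
      (th M φ m, clth M φ z, {a | ∃ y, nxt M z y ∧ a = cfun M φ n y}) := by
  rw [cfun_succ]
  refine congrArg _ ?_
  rw [Prod.ext_iff]
  constructor
  · exact (clth_cluster hbi h2 h1 : clth M φ m = clth M φ z)
  · show {a | ∃ y, nxt M m y ∧ a = cfun M φ n y} = _
    ext a
    simp only [Set.mem_setOf_eq]
    constructor
    · rintro ⟨y, hy, rfl⟩
      exact ⟨y, (nxt_cluster hdep hbi h1 h2).1 hy, rfl⟩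
    · rintro ⟨y, hy, rfl⟩
      exact ⟨y, (nxt_cluster hdep hbi h1 h2).2 hy, rfl⟩

include hdep hbi in
lemma cluster_det {z z' : M.W} (h : cfun M φ (n+1) z = cfun M φ (n+1) z') :
    {a | ∃ m, M.le z m ∧ M.le m z ∧ a = cfun M φ (n+1) m} =
      {a | ∃ m, M.le z' m ∧ M.le m z' ∧ a = cfun M φ (n+1) m} := by
  obtain ⟨hth, hcl, hsucc⟩ := cfun_parts h
  ext a
  simp only [Set.mem_setOf_eq]
  constructor
  · rintro ⟨m, h1, h2, rfl⟩
    have : th M φ m ∈ clth M φ z' := by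
      rw [← hcl]; exact ⟨m, h1, h2, rfl⟩
    obtain ⟨m', h1', h2', hth'⟩ := this
    refine ⟨m', h1', h2', ?_⟩
    rw [cfun_cluster_val hdep hbi h1 h2, cfun_cluster_val hdep hbi h1' h2',
      ← hth', hcl, hsucc]
  · rintro ⟨m, h1, h2, rfl⟩
    have : th M φ m ∈ clth M φ z := by
      rw [hcl]; exact ⟨m, h1, h2, rfl⟩
    obtain ⟨m', h1', h2', hth'⟩ := this
    refine ⟨m', h1', h2', ?_⟩
    rw [cfun_cluster_val hdep hbi h1 h2, cfun_cluster_val hdep hbi h1' h2',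
      ← hth', hcl, hsucc]

include hbi in
lemma Fc_self (w : M.W) : cfun M φ (n+1) w ∈ Fc M φ n w (rk M w) :=
  ⟨w, hbi.1 w, rfl, rfl⟩

include hbi in
lemma Fc_cluster {w v : M.W} (h1 : M.le w v) (h2 : M.le v w) :
    Fc M φ n w = Fc M φ n v := by
  funext i
  ext a
  constructor
  · rintro ⟨z, hz1, hz2, rfl⟩
    exact ⟨z, hbi.2.1 _ _ _ hz1 h1, hz2, rfl⟩
  · rintro ⟨z, hz1, hz2, rfl⟩
    exact ⟨z, hbi.2.1 _ _ _ hz1 h2, hz2, rfl⟩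

include hdep hbi hforest in
lemma Fc_trunc {u v : M.W} (h : M.le u v) {j : ℕ} (hj : j ≤ rk M u) :
    Fc M φ n u j = Fc M φ n v j := by
  ext a
  constructor
  · rintro ⟨z, hz1, hz2, rfl⟩
    exact ⟨z, hbi.2.1 _ _ _ hz1 h, hz2, rfl⟩
  · rintro ⟨z, hz1, hz2, rfl⟩
    refine ⟨z, ?_, hz2, rfl⟩
    rcases hforest v z u hz1 h with hc | hc
    · -- le z u
      exact hc
    · -- le u z : then rk u ≤ rk z = j ≤ rk u, so cluster
      have := rk_le_of_le hdep hbi hc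
      exact cluster_of_rk_eq hdep hbi hc (by omega)

include hdep hbi in
lemma Fc_empty {w : M.W} {j : ℕ} (hj : rk M w < j) : Fc M φ n w j = ∅ := by
  ext a
  simp only [Set.mem_empty_iff_false, iff_false]
  rintro ⟨z, hz1, hz2, rfl⟩
  have := rk_le_of_le hdep hbi hz1
  omega

include hdep hbi in
lemma Fc_top (v : M.W) :
    Fc M φ n v (rk M v) =
      {a | ∃ m, M.le v m ∧ M.le m v ∧ a = cfun M φ (n+1) m} := by
  ext a
  constructor
  · rintro ⟨z, hz1, hz2, rfl⟩
    exact ⟨z, cluster_of_rk_eq hdep hbi hz1 hz2, hz1, rfl⟩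
  · rintro ⟨m, h1, h2, rfl⟩
    exact ⟨m, h2, rk_cluster hdep hbi h2 h1, rfl⟩

include hdep hbi hforest in
/-- backward zig for full types -/
lemma zigB {u v v' : M.W} (h : tB M φ n v = tB M φ n v') (hle : M.le u v) :
    ∃ u', M.le u' v' ∧ tB M φ n u' = tB M φ n u := by
  obtain ⟨hc, hr, hF⟩ := tB_parts h
  have hmem : cfun M φ (n+1) u ∈ Fc M φ n v' (rk M u) := by
    rw [← congrFun hF (rk M u)]
    exact ⟨u, hle, rfl, rfl⟩
  obtain ⟨u', hu'1, hu'2, hu'3⟩ := hmem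
  refine ⟨u', hu'1, ?_⟩
  rw [tB_eq_iff]
  refine ⟨hu'3.symm, by omega, ?_⟩
  funext i
  by_cases hi : i ≤ rk M u
  · rw [Fc_trunc hdep hbi hforest hu'1 (by omega),
      Fc_trunc hdep hbi hforest hle hi, ← hF]
  · rw [Fc_empty hdep hbi (by omega), Fc_empty hdep hbi (by omega)]


include hdep hbi hforest in
lemma zigF_base {w v w' : M.W} (heq : rk M v = rk M w)
    (h : tB M φ n w = tB M φ n w') (hle : M.le w v) :
    ∃ v', M.le w' v' ∧ tB M φ n v' = tB M φ n v := by
  obtain ⟨hc, hr, hF⟩ := tB_parts h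
  have hvw : M.le v w := cluster_of_rk_eq hdep hbi hle heq.symm
  have hmem : cfun M φ (n+1) v ∈ Fc M φ n w' (rk M w) := by
    rw [← congrFun hF (rk M w)]
    exact ⟨v, hvw, heq, rfl⟩
  obtain ⟨v', hv'1, hv'2, hv'3⟩ := hmem
  have hwv' : M.le w' v' := cluster_of_rk_eq hdep hbi hv'1 (by omega)
  refine ⟨v', hwv', ?_⟩
  rw [tB_eq_iff]
  refine ⟨hv'3.symm, by omega, ?_⟩
  rw [Fc_cluster hbi hv'1 hwv', ← hF, Fc_cluster hbi hvw hle]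

include hdep hbi hforest in
/-- forward zig for full types -/
lemma zigF : ∀ (D : ℕ) (w v w' : M.W), rk M v - rk M w ≤ D →
    tB M φ n w = tB M φ n w' → M.le w v →
    ∃ v', M.le w' v' ∧ tB M φ n v' = tB M φ n v := by
  intro D
  induction D with
  | zero =>
      intro w v w' hD h hle
      have := rk_le_of_le hdep hbi hle
      exact zigF_base hdep hbi hforest (by omega) h hle
  | succ D ih =>
      intro w v w' hD h hle
      by_cases heq : rk M v = rk M w
      · exact zigF_base hdep hbi hforest heq h hle
      · have hwv : rk M w ≤ rk M v := rk_le_of_le hdep hbi hle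
        have hlt : rk M w < rk M v := by omega
        obtain ⟨z, hz1, hz2⟩ := rk_realize hdep hbi (show rk M w + 1 ≤ rk M v by omega)
        -- w ≺ z and nxt w z
        have hcomp := hforest v z w hz1 hle
        have hwz : M.le w z := by
          rcases hcomp with hc | hc
          · exfalso
            have := rk_le_of_le hdep hbi hc
            omega
          · exact hc
        have hnxt : nxt M w z := by
          refine ⟨⟨hwz, fun hzw => ?_⟩, by omega⟩
          have := rk_le_of_le hdep hbi hzw
          omega
        obtain ⟨hc, hr, hF⟩ := tB_parts h
        have hstab := stab hdep hbi (dep M w) w le_rfl n w' (dep_le_n hdep w) hc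
          (n+1) (by omega)
        obtain ⟨_, _, hsucc⟩ := cfun_parts hstab
        have hmem : cfun M φ (n+1) z ∈
            {a | ∃ y, nxt M w' y ∧ a = cfun M φ (n+1) y} := by
          rw [← hsucc]; exact ⟨z, hnxt, rfl⟩
        obtain ⟨z', hz', hzz'⟩ := hmem
        have hz'B : tB M φ n z' = tB M φ n z := by
          rw [tB_eq_iff]
          refine ⟨hzz'.symm, by obtain ⟨_, h2⟩ := hz'; obtain ⟨_, h4⟩ := hnxt; omega, ?_⟩
          funext i
          by_cases hi : i ≤ rk M w
          · have hi' : i ≤ rk M w' := by omega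
            rw [← Fc_trunc hdep hbi hforest hz'.1.1 hi',
              ← Fc_trunc hdep hbi hforest hwz (show i ≤ rk M w from hi)]
            exact (congrFun hF i).symm
          · by_cases hi2 : i = rk M w + 1
            · subst hi2
              have e1 : rk M z' = rk M w + 1 := by obtain ⟨_, h2⟩ := hz'; omega
              have e2 : rk M z = rk M w + 1 := hz2
              conv_lhs => rw [← e1]
              conv_rhs => rw [← e2]
              rw [Fc_top hdep hbi, Fc_top hdep hbi]
              exact cluster_det hdep hbi hzz'.symm
            · have e1 : rk M z' = rk M w + 1 := by obtain ⟨_, h2⟩ := hz'; omega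
              rw [Fc_empty hdep hbi (by omega), Fc_empty hdep hbi (by omega)]
        have := ih z v z' (by omega) hz'B.symm hz1
        obtain ⟨v', hv'1, hv'2⟩ := this
        exact ⟨v', hbi.2.1 _ _ _ hz'.1.1 hv'1, hv'2⟩

end TB

section SemS4I

variable {M : KModel.{u}} (hM : M.IsS4I)

include hM in
lemma box_persist {u v : M.W} {a : Fml} (h : M.sq u v)
    (hb : M.Sat (Fml.box a) u) : M.Sat (Fml.box a) v := by
  obtain ⟨hbi, hfu, hfd, hinf⟩ := hM
  intro c d hc hd
  obtain ⟨e, he1, he2⟩ := hfd v c d hc hd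
  exact sat_mono hbi a he2 (hb u e (hbi.1 u) (hbi.2.2.2.1 _ _ _ h he1))

include hM in
lemma dia_intro {u x : M.W} {a : Fml} (h : M.sq u x)
    (ha : M.Sat a x) : M.Sat (Fml.dia a) u := by
  obtain ⟨hbi, hfu, hfd, hinf⟩ := hM
  intro c hc
  obtain ⟨x', hx'1, hx'2⟩ := hfu u c x hc h
  exact ⟨x', hx'2, sat_mono hbi a hx'1 ha⟩

include hM in
lemma dia_reflect {u x : M.W} {a : Fml} (h : M.sq u x)
    (ha : M.Sat (Fml.dia a) x) : M.Sat (Fml.dia a) u := by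
  obtain ⟨hbi, hfu, hfd, hinf⟩ := hM
  intro c hc
  obtain ⟨x', hx'1, hx'2⟩ := hfu u c x hc h
  obtain ⟨b, hb1, hb2⟩ := sat_mono hbi _ hx'1 ha x' (hbi.1 x')
  exact ⟨b, hbi.2.2.2.1 _ _ _ hx'2 hb1, hb2⟩

include hM in
lemma box_local {w : M.W} {a : Fml} (h : ¬ M.Sat (Fml.box a) w) :
    ∃ x, M.sq w x ∧ ¬ M.Sat a x := by
  obtain ⟨hbi, hfu, hfd, hinf⟩ := hM
  simp only [KModel.Sat] at h
  push_neg at h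
  obtain ⟨u, v, hu, hv, hva⟩ := h
  obtain ⟨x, hx1, hx2⟩ := hfd w u v hu hv
  exact ⟨x, hx1, fun hx => hva (sat_mono hbi a hx2 hx)⟩

lemma sat_of_th_eq {w w' : M.W} {φ ψ : Fml} (h : th M φ w = th M φ w')
    (hsub : ψ ∈ φ.subf) (hs : M.Sat ψ w) : M.Sat ψ w' := by
  have : ψ ∈ th M φ w' := by rw [← h, mem_th]; exact ⟨hsub, hs⟩
  exact (mem_th.1 this).2

end SemS4I

section SNsec

/-- the finite S4I model -/
def SN (M : KModel.{u}) (φ : Fml) (n : ℕ) : KModel.{0} where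
  W := {a : AT (n+1) × ℕ × (ℕ → Set (AT (n+1))) // a ∈ Set.range (tB M φ n)}
  fallible := ∅
  le := fun f g => ∃ w v : M.W, M.le w v ∧ tB M φ n w = f.1 ∧ tB M φ n v = g.1
  sq := Relation.TransGen
    (fun f g => ∃ u x : M.W, M.sq u x ∧ tB M φ n u = f.1 ∧ tB M φ n x = g.1)
  val := fun p => {f | Fml.var p ∈ φ.subf → Fml.var p ∈ f.1.1.1}

variable {M : KModel.{u}} {n : ℕ} {φ : Fml}

lemma tB_fst {w : M.W} {f : (SN M φ n).W} (h : tB M φ n w = f.1) :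
    f.1.1.1 = th M φ w := by
  rw [← h]; rfl

variable (hM : M.IsS4I) (hdep : M.DepthLE n) (hforest : M.ForestLike)

/-- single sq steps -/
abbrev sqStep (f g : (SN M φ n).W) : Prop :=
  ∃ u x : M.W, M.sq u x ∧ tB M φ n u = f.1 ∧ tB M φ n x = g.1

lemma sn_sq_iff {f g : (SN M φ n).W} :
    (SN M φ n).sq f g ↔ Relation.TransGen (sqStep (M := M) (n := n) (φ := φ)) f g :=
  Iff.rfl

include hM hdep hforest in
lemma sn_le_trans {f g h : (SN M φ n).W}
    (h1 : (SN M φ n).le f g) (h2 : (SN M φ n).le g h) : (SN M φ n).le f h := by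
  obtain ⟨w, v, hwv, hw, hv⟩ := h1
  obtain ⟨v₂, m, hvm, hv₂, hm⟩ := h2
  have hvv : tB M φ n v₂ = tB M φ n v := by rw [hv₂, ← hv]
  obtain ⟨m', hm'1, hm'2⟩ :=
    zigF hdep hM.1 hforest (rk M m - rk M v₂) v₂ m v le_rfl hvv hvm
  exact ⟨w, m', hM.1.2.1 _ _ _ hwv hm'1, hw, by rw [hm'2, hm]⟩

include hM in
lemma sn_le_refl (f : (SN M φ n).W) : (SN M φ n).le f f := by
  obtain ⟨w, hw⟩ := f.2
  exact ⟨w, w, hM.1.1 w, hw, hw⟩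

include hM in
lemma sn_sq_refl (f : (SN M φ n).W) : (SN M φ n).sq f f := by
  obtain ⟨w, hw⟩ := f.2
  exact Relation.TransGen.single ⟨w, w, hM.1.2.2.1 w, hw, hw⟩

include hM hdep hforest in
lemma sn_fu_single {f g h : (SN M φ n).W} (hsq : sqStep f h)
    (hle : (SN M φ n).le f g) :
    ∃ h', (SN M φ n).le h h' ∧ sqStep g h' := by
  obtain ⟨u, x, hux, hu, hx⟩ := hsq
  obtain ⟨w, v, hwv, hw, hv⟩ := hle
  have huw : tB M φ n w = tB M φ n u := by rw [hw, ← hu]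
  obtain ⟨v₂, hv₂1, hv₂2⟩ :=
    zigF hdep hM.1 hforest (rk M v - rk M w) w v u le_rfl huw hwv
  obtain ⟨x', hx'1, hx'2⟩ := hM.2.1 u v₂ x hv₂1 hux
  refine ⟨⟨tB M φ n x', Set.mem_range_self x'⟩, ⟨x, x', hx'1, hx, rfl⟩,
    ⟨v₂, x', hx'2, by rw [hv₂2, hv], rfl⟩⟩

include hM hdep hforest in
lemma sn_fd_single {f g h : (SN M φ n).W} (hsq : sqStep g h)
    (hle : (SN M φ n).le f g) :
    ∃ h'', sqStep f h'' ∧ (SN M φ n).le h'' h := by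
  obtain ⟨v₂, x₂, hvx, hv₂, hx₂⟩ := hsq
  obtain ⟨u₁, v₁, huv, hu₁, hv₁⟩ := hle
  have hvv : tB M φ n v₁ = tB M φ n v₂ := by rw [hv₁, ← hv₂]
  obtain ⟨u₂, hu₂1, hu₂2⟩ := zigB hdep hM.1 hforest hvv huv
  obtain ⟨y, hy1, hy2⟩ := hM.2.2.1 u₂ v₂ x₂ hu₂1 hvx
  refine ⟨⟨tB M φ n y, Set.mem_range_self y⟩,
    ⟨u₂, y, hy1, by rw [hu₂2, hu₁], rfl⟩, ⟨y, x₂, hy2, rfl, hx₂⟩⟩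

include hM hdep hforest in
lemma sn_fu {f h : (SN M φ n).W} (hsq : (SN M φ n).sq f h) :
    ∀ g, (SN M φ n).le f g → ∃ h', (SN M φ n).le h h' ∧ (SN M φ n).sq g h' := by
  rw [sn_sq_iff] at hsq
  induction hsq with
  | single hstep =>
      intro g hle
      obtain ⟨h', h1, h2⟩ := sn_fu_single hM hdep hforest hstep hle
      exact ⟨h', h1, Relation.TransGen.single h2⟩
  | tail hgm hstep ih =>
      intro g hle
      obtain ⟨m', hm'1, hm'2⟩ := ih g hle
      obtain ⟨h', h1, h2⟩ := sn_fu_single hM hdep hforest hstep hm'1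
      exact ⟨h', h1, hm'2.tail h2⟩

include hM hdep hforest in
lemma sn_fd {g h : (SN M φ n).W} (hsq : (SN M φ n).sq g h) :
    ∀ f, (SN M φ n).le f g → ∃ h'', (SN M φ n).sq f h'' ∧ (SN M φ n).le h'' h := by
  rw [sn_sq_iff] at hsq
  induction hsq with
  | single hstep =>
      intro f hle
      obtain ⟨h'', h1, h2⟩ := sn_fd_single hM hdep hforest hstep hle
      exact ⟨h'', Relation.TransGen.single h1, h2⟩
  | tail hgm hstep ih =>
      intro f hle
      obtain ⟨m'', hm1, hm2⟩ := ih f hle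
      obtain ⟨h'', h1, h2⟩ := sn_fd_single hM hdep hforest hstep hm2
      exact ⟨h'', hm1.tail h1, h2⟩

end SNsec

section SNtruth

variable {M : KModel.{u}} {n : ℕ} {φ : Fml}
variable (hM : M.IsS4I) (hdep : M.DepthLE n) (hforest : M.ForestLike)

include hM in
lemma box_chain {a : Fml} (hsub : Fml.box a ∈ φ.subf) {g h : (SN M φ n).W}
    (hsq : (SN M φ n).sq g h) :
    ∀ c : M.W, tB M φ n c = g.1 → M.Sat (Fml.box a) c →
      ∃ d : M.W, tB M φ n d = h.1 ∧ M.Sat (Fml.box a) d := by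
  rw [sn_sq_iff] at hsq
  induction hsq with
  | single hstep =>
      intro c hc hcb
      obtain ⟨u, x, hux, hu, hx⟩ := hstep
      have hth : th M φ c = th M φ u := tB_th (by rw [hc, ← hu])
      have hub : M.Sat (Fml.box a) u := sat_of_th_eq hth hsub hcb
      exact ⟨x, hx, box_persist hM hux hub⟩
  | tail hgm hstep ih =>
      intro c hc hcb
      obtain ⟨d, hd1, hd2⟩ := ih c hc hcb
      obtain ⟨u, x, hux, hu, hx⟩ := hstep
      have hth : th M φ d = th M φ u := tB_th (by rw [hd1, ← hu])
      have hub : M.Sat (Fml.box a) u := sat_of_th_eq hth hsub hd2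
      exact ⟨x, hx, box_persist hM hux hub⟩

include hM in
lemma dia_chain {a : Fml} (hsub : Fml.dia a ∈ φ.subf) {g h : (SN M φ n).W}
    (hsq : (SN M φ n).sq g h) :
    ∀ d : M.W, tB M φ n d = h.1 → M.Sat (Fml.dia a) d →
      ∃ c : M.W, tB M φ n c = g.1 ∧ M.Sat (Fml.dia a) c := by
  rw [sn_sq_iff] at hsq
  induction hsq with
  | single hstep =>
      intro d hd hdd
      obtain ⟨u, x, hux, hu, hx⟩ := hstep
      have hth : th M φ d = th M φ x := tB_th (by rw [hd, ← hx])
      have hxd : M.Sat (Fml.dia a) x := sat_of_th_eq hth hsub hdd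
      exact ⟨u, hu, dia_reflect hM hux hxd⟩
  | tail hgm hstep ih =>
      intro d hd hdd
      obtain ⟨u, x, hux, hu, hx⟩ := hstep
      have hth : th M φ d = th M φ x := tB_th (by rw [hd, ← hx])
      have hxd : M.Sat (Fml.dia a) x := sat_of_th_eq hth hsub hdd
      exact ih u hu (dia_reflect hM hux hxd)

include hM hdep hforest in
/-- Truth lemma for the S4I construction. -/
lemma struth : ∀ ψ, ψ ∈ φ.subf → ∀ (f : (SN M φ n).W) (w : M.W),
    tB M φ n w = f.1 → ((SN M φ n).Sat ψ f ↔ M.Sat ψ w) := by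
  have hbi := hM.1
  intro ψ
  induction ψ with
  | var p =>
      intro hsub f w hw
      show (Fml.var p ∈ φ.subf → Fml.var p ∈ f.1.1.1) ↔ _
      rw [tB_fst hw]
      constructor
      · intro h
        exact (mem_th.1 (h hsub)).2
      · intro h _
        rw [mem_th]; exact ⟨hsub, h⟩
  | bot =>
      intro hsub f w hw
      show f ∈ (∅ : Set _) ↔ w ∈ M.fallible
      rw [hM.2.2.2]
      simp
  | and a b iha ihb =>
      intro hsub f w hw
      have ha := (Fml.and_mem_subf hsub).1
      have hb := (Fml.and_mem_subf hsub).2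
      show (SN M φ n).Sat a f ∧ (SN M φ n).Sat b f ↔ M.Sat a w ∧ M.Sat b w
      rw [iha ha f w hw, ihb hb f w hw]
  | or a b iha ihb =>
      intro hsub f w hw
      have ha := (Fml.or_mem_subf hsub).1
      have hb := (Fml.or_mem_subf hsub).2
      show (SN M φ n).Sat a f ∨ (SN M φ n).Sat b f ↔ M.Sat a w ∨ M.Sat b w
      rw [iha ha f w hw, ihb hb f w hw]
  | imp a b iha ihb =>
      intro hsub f w hw
      have ha := (Fml.imp_mem_subf hsub).1
      have hb := (Fml.imp_mem_subf hsub).2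
      constructor
      · intro hs v hv hsa
        have hle : (SN M φ n).le f ⟨tB M φ n v, Set.mem_range_self v⟩ :=
          ⟨w, v, hv, hw, rfl⟩
        have := hs _ hle ((iha ha _ v rfl).2 hsa)
        exact (ihb hb _ v rfl).1 this
      · intro hs g hle hsa
        obtain ⟨w₂, v₂, hwv, hw₂, hv₂⟩ := hle
        have hww : tB M φ n w₂ = tB M φ n w := by rw [hw₂, ← hw]
        obtain ⟨v, hv1, hv2⟩ :=
          zigF hdep hbi hforest (rk M v₂ - rk M w₂) w₂ v₂ w le_rfl hww hwv
        have hgv : tB M φ n v = g.1 := by rw [hv2, hv₂]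
        have := hs v hv1 ((iha ha g v hgv).1 hsa)
        exact (ihb hb g v hgv).2 this
  | dia a iha =>
      intro hsub f w hw
      have ha := Fml.dia_mem_subf hsub
      constructor
      · intro hs
        obtain ⟨h, hsq, hsa⟩ := hs f (sn_le_refl hM f)
        obtain ⟨b, hb⟩ := h.2
        have hsb : M.Sat a b := (iha ha h b hb).1 hsa
        have hdb : M.Sat (Fml.dia a) b := dia_intro hM (hM.1.2.2.1 b) hsb
        obtain ⟨c, hc1, hc2⟩ := dia_chain hM hsub hsq b hb hdb
        have hth : th M φ c = th M φ w := tB_th (by rw [hc1, ← hw])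
        exact sat_of_th_eq hth hsub hc2
      · intro hs g hle
        obtain ⟨w₂, v₂, hwv, hw₂, hv₂⟩ := hle
        have hww : tB M φ n w₂ = tB M φ n w := by rw [hw₂, ← hw]
        obtain ⟨v, hv1, hv2⟩ :=
          zigF hdep hbi hforest (rk M v₂ - rk M w₂) w₂ v₂ w le_rfl hww hwv
        have hgv : tB M φ n v = g.1 := by rw [hv2, hv₂]
        obtain ⟨x, hx1, hx2⟩ := sat_mono hbi _ hv1 hs v (hbi.1 v)
        refine ⟨⟨tB M φ n x, Set.mem_range_self x⟩,
          Relation.TransGen.single ⟨v, x, hx1, hgv, rfl⟩, ?_⟩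
        exact (iha ha _ x rfl).2 hx2
  | box a iha =>
      intro hsub f w hw
      have ha := Fml.box_mem_subf hsub
      constructor
      · intro hs
        by_contra hmem
        obtain ⟨x, hx1, hx2⟩ := box_local hM hmem
        have := hs f ⟨tB M φ n x, Set.mem_range_self x⟩ (sn_le_refl hM f)
          (Relation.TransGen.single ⟨w, x, hx1, hw, rfl⟩)
        exact hx2 ((iha ha _ x rfl).1 this)
      · intro hs g h hle hsq
        obtain ⟨w₂, v₂, hwv, hw₂, hv₂⟩ := hle
        have hww : tB M φ n w₂ = tB M φ n w := by rw [hw₂, ← hw]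
        obtain ⟨v, hv1, hv2⟩ :=
          zigF hdep hbi hforest (rk M v₂ - rk M w₂) w₂ v₂ w le_rfl hww hwv
        have hgv : tB M φ n v = g.1 := by rw [hv2, hv₂]
        have hvb : M.Sat (Fml.box a) v := sat_mono hbi _ hv1 hs
        obtain ⟨d, hd1, hd2⟩ := box_chain hM hsub hsq v hgv hvb
        have := hd2 d d (hbi.1 d) (hbi.2.2.1 d)
        exact (iha ha h d hd1).2 this

end SNtruth

section SNframe

variable {M : KModel.{u}} {n : ℕ} {φ : Fml}
variable (hM : M.IsS4I) (hdep : M.DepthLE n) (hforest : M.ForestLike)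

include hM hdep hforest in
lemma SN_isS4I : (SN M φ n).IsS4I := by
  have hbi := hM.1
  refine ⟨⟨sn_le_refl hM, ?_, sn_sq_refl hM, ?_, ?_, ?_, ?_, ?_⟩, ?_, ?_, rfl⟩
  · intro f g h h1 h2
    exact sn_le_trans hM hdep hforest h1 h2
  · intro f g h h1 h2
    exact h1.trans h2
  · intro f g hf _
    exact absurd hf (Set.notMem_empty f)
  · intro f g hf _
    exact absurd hf (Set.notMem_empty f)
  · intro p f g hf hle hsub
    obtain ⟨w, v, hwv, hw, hv⟩ := hle
    have h1 : Fml.var p ∈ th M φ w := by rw [← tB_fst hw]; exact hf hsub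
    rw [tB_fst hv, mem_th]
    rw [mem_th] at h1
    exact ⟨hsub, sat_mono hbi _ hwv h1.2⟩
  · intro p f hf
    exact absurd hf (Set.notMem_empty f)
  · intro f g h hle hsq
    exact sn_fu hM hdep hforest hsq g hle
  · intro f g h hle hsq
    exact sn_fd hM hdep hforest hsq f hle

lemma cfun_range_finite (M : KModel.{u}) (φ : Fml) :
    ∀ k, (Set.range (cfun M φ k)).Finite := by
  intro k
  induction k with
  | zero =>
      have : Finite (AT 0) := by unfold AT; exact inferInstance
      exact Set.toFinite _
  | succ k ih =>
      have h1 : (↑(φ.subf.powerset) : Set (Finset Fml)).Finite :=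
        Finset.finite_toSet _
      have h2 : {C : Set (Finset Fml) | C ⊆ ↑(φ.subf.powerset)}.Finite :=
        Set.Finite.finite_subsets h1
      have h3 : {S : Set (AT k) | S ⊆ Set.range (cfun M φ k)}.Finite :=
        Set.Finite.finite_subsets ih
      refine Set.Finite.subset (h1.prod (h2.prod h3)) ?_
      rintro a ⟨w, rfl⟩
      refine ⟨?_, ?_, ?_⟩
      · show th M φ w ∈ _
        simp only [Finset.coe_powerset, Set.mem_preimage, Set.mem_powerset_iff,
          Finset.coe_subset]
        exact th_subset w
      · show clth M φ w ∈ _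
        rintro t ⟨z, _, _, rfl⟩
        simp only [Finset.coe_powerset, Set.mem_preimage, Set.mem_powerset_iff,
          Finset.coe_subset]
        exact th_subset z
      · rintro a ⟨z, _, rfl⟩
        exact Set.mem_range_self z

include hM hdep in
lemma tB_range_finite : (Set.range (tB M φ n)).Finite := by
  have hbi := hM.1
  set R := Set.range (cfun M φ (n+1)) with hR
  set G := {F : ℕ → Set (AT (n+1)) |
    (∀ i, F i ⊆ R) ∧ ∀ i, n < i → F i = ∅} with hG
  have hGfin : G.Finite := by
    have hP : (Set.pi Set.univ
        (fun _ : Fin (n+1) => {S : Set (AT (n+1)) | S ⊆ R})).Finite :=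
      Set.Finite.pi (fun _ => Set.Finite.finite_subsets (cfun_range_finite M φ (n+1)))
    have himg : ((fun (F : ℕ → Set (AT (n+1))) => fun i : Fin (n+1) => F i) '' G).Finite := by
      refine hP.subset ?_
      rintro _ ⟨F, hF, rfl⟩
      intro i _
      exact hF.1 i
    refine Set.Finite.of_finite_image himg ?_
    intro F hF F' hF' heq
    funext i
    by_cases hi : i ≤ n
    · exact congrFun heq ⟨i, by omega⟩
    · rw [hF.2 i (by omega), hF'.2 i (by omega)]
  have hIic : (Set.Iic n).Finite := Set.finite_Iic n
  refine Set.Finite.subset ((cfun_range_finite M φ (n+1)).prod (hIic.prod hGfin)) ?_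
  rintro a ⟨w, rfl⟩
  refine ⟨Set.mem_range_self w, ?_, ?_, ?_⟩
  · exact rk_le_n hdep w
  · intro i
    rintro x ⟨z, _, _, rfl⟩
    exact Set.mem_range_self z
  · intro i hi
    have := rk_le_n hdep w
    exact Fc_empty hdep hbi (by omega)

include hM hdep hforest in
lemma s4i_package (w : M.W) :
    ∃ (N : KModel.{0}) (v : N.W), N.IsS4I ∧ Finite N.W ∧ v ∉ N.fallible ∧
      (N.Sat φ v ↔ M.Sat φ w) := by
  refine ⟨SN M φ n, ⟨tB M φ n w, Set.mem_range_self w⟩,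
    SN_isS4I hM hdep hforest, ?_, ?_, ?_⟩
  · exact (tB_range_finite hM hdep).to_subtype
  · exact Set.notMem_empty _
  · exact struth hM hdep hforest φ (Fml.mem_subf_self φ) _ w rfl

end SNframe

end S4Isec


/-- **From shallow frames to finite frames.** (1) If an `L`-formula `φ` is
falsifiable (respectively, satisfiable) on a shallow CS4 frame, then `φ` is
falsifiable (respectively, satisfiable) on a finite CS4 frame. (2) If `φ` is
falsifiable (respectively, satisfiable) on a shallow, forest-like S4I frame,
then `φ` is falsifiable (respectively, satisfiable) on a finite S4I frame. -/
theorem shallow_to_finite (φ : Fml) :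
    ((∃ (M : KModel.{u}) (w : M.W), M.IsCS4 ∧ M.Shallow ∧
        w ∉ M.fallible ∧ ¬ M.Sat φ w) →
      ∃ (N : KModel.{0}) (v : N.W), N.IsCS4 ∧ Finite N.W ∧
        v ∉ N.fallible ∧ ¬ N.Sat φ v) ∧
    ((∃ (M : KModel.{u}) (w : M.W), M.IsCS4 ∧ M.Shallow ∧
        w ∉ M.fallible ∧ M.Sat φ w) →
      ∃ (N : KModel.{0}) (v : N.W), N.IsCS4 ∧ Finite N.W ∧
        v ∉ N.fallible ∧ N.Sat φ v) ∧
    ((∃ (M : KModel.{u}) (w : M.W), M.IsS4I ∧ M.Shallow ∧ M.ForestLike ∧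
        w ∉ M.fallible ∧ ¬ M.Sat φ w) →
      ∃ (N : KModel.{0}) (v : N.W), N.IsS4I ∧ Finite N.W ∧
        v ∉ N.fallible ∧ ¬ N.Sat φ v) ∧
    ((∃ (M : KModel.{u}) (w : M.W), M.IsS4I ∧ M.Shallow ∧ M.ForestLike ∧
        w ∉ M.fallible ∧ M.Sat φ w) →
      ∃ (N : KModel.{0}) (v : N.W), N.IsS4I ∧ Finite N.W ∧
        v ∉ N.fallible ∧ N.Sat φ v) := by
  refine ⟨?_, ?_, ?_, ?_⟩
  · rintro ⟨M, w, hM, _, hw, hsat⟩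
    obtain ⟨N, v, h1, h2, h3, h4⟩ := cs4_package (φ := φ) hM w hw
    exact ⟨N, v, h1, h2, h3, fun h => hsat (h4.1 h)⟩
  · rintro ⟨M, w, hM, _, hw, hsat⟩
    obtain ⟨N, v, h1, h2, h3, h4⟩ := cs4_package (φ := φ) hM w hw
    exact ⟨N, v, h1, h2, h3, h4.2 hsat⟩
  · rintro ⟨M, w, hM, hsh, hforest, hw, hsat⟩
    obtain ⟨n, hdep⟩ := hsh
    obtain ⟨N, v, h1, h2, h3, h4⟩ := s4i_package (φ := φ) hM hdep hforest w
    exact ⟨N, v, h1, h2, h3, fun h => hsat (h4.1 h)⟩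
  · rintro ⟨M, w, hM, hsh, hforest, hw, hsat⟩
    obtain ⟨n, hdep⟩ := hsh
    obtain ⟨N, v, h1, h2, h3, h4⟩ := s4i_package (φ := φ) hM hdep hforest w
    exact ⟨N, v, h1, h2, h3, h4.2 hsat⟩
end
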